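/- arXiv:1310.5895 — 3 statements merged into one kernel-verified Lean document; each statement's English description precedes it below -/
import Mathlib

section
/- Let n, s ∈ ℕ with s ≤ n. For every x ∈ ℂ^n with at most s non-zero entries and every y ∈ ℂ^n, it holds that ‖(x,0) ⊛ (y,0)‖ ≤ √s·‖x‖·‖y‖, where (x,0), (y,0) ∈ ℂ^{2n−1} denote the vectors padded by n−1 zeros and ⊛ is the circular convolution in ℂ^{2n−1}. -/
open scoped BigOperators

/-- Circular convolution on `ℂ^m`: `(u ⊛ v)_k = ∑_l u_l v_{(k-l) mod m}`. -/
noncomputable def cconv {m : ℕ} (u v : Fin m → ℂ) : Fin m → ℂ :=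
  fun k => ∑ l : Fin m, u l * v (k - l)

/-- Circular correlation on `ℂ^m`: `(u ⋆ v)_k = ∑_l u_l conj (v_{(k+l) mod m})`. -/
noncomputable def ccorr {m : ℕ} (u v : Fin m → ℂ) : Fin m → ℂ :=
  fun k => ∑ l : Fin m, u l * (starRingEnd ℂ) (v (k + l))

/-- Euclidean (ℓ²) norm of a vector. -/
noncomputable def euclNorm {m : ℕ} {E : Type*} [SeminormedAddGroup E] (x : Fin m → E) : ℝ :=
  Real.sqrt (∑ i, ‖x i‖ ^ 2)

/-- Zero padding `ℂ^n → ℂ^m` (entries of `x` followed by zeros). -/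
def pad (n m : ℕ) (x : Fin n → ℂ) : Fin m → ℂ :=
  fun k => if h : (k : ℕ) < n then x ⟨k, h⟩ else 0

/-- `x` has at most `s` nonzero entries. -/
def sparse {n : ℕ} (s : ℕ) (x : Fin n → ℂ) : Prop :=
  Set.ncard {i | x i ≠ 0} ≤ s

/-- The unitary DFT matrix `F_{kl} = m^{-1/2} exp(2πi kl/m)`. -/
noncomputable def dft (m : ℕ) : Matrix (Fin m) (Fin m) ℂ :=
  fun k l => ((Real.sqrt m : ℝ) : ℂ)⁻¹ *
    Complex.exp (2 * (Real.pi : ℂ) * Complex.I * ((k : ℕ) : ℂ) * ((l : ℕ) : ℂ) / (m : ℂ))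

/-- Cyclic shift: `(S x)_k = x_{(k-1) mod m}`. -/
def shiftOp {m : ℕ} (x : Fin m → ℂ) : Fin m → ℂ :=
  fun k => x ⟨((k : ℕ) + (m - 1)) % m, Nat.mod_lt _ (by have := k.isLt; omega)⟩

/-- Time reversal: `(Γ x)_k = x_{(-k) mod m}`. -/
def rev {m : ℕ} (u : Fin m → ℂ) : Fin m → ℂ := fun k => u (-k)

/-- Symmetrization `𝒮 : ℂ^n → ℂ^{2n-1}`,
`𝒮(x) = (x_0, …, x_{n-1}, conj x_{n-1}, …, conj x_1)`. -/
noncomputable def symmetrize (n : ℕ) (x : Fin n → ℂ) : Fin (2 * n - 1) → ℂ :=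
  fun k =>
    if h : (k : ℕ) < n then x ⟨k, h⟩
    else (starRingEnd ℂ) (x ⟨2 * n - 1 - (k : ℕ), by have := k.isLt; omega⟩)

/-- Zero-padded symmetrization `𝒮_z : ℂ^n → ℂ^{4n-3}`, `𝒮_z(x) = 𝒮((x, 0_{n-1}))`. -/
noncomputable def symmetrizeZ (n : ℕ) (x : Fin n → ℂ) : Fin (4 * n - 3) → ℂ :=
  fun k => symmetrize (2 * n - 1) (pad n (2 * n - 1) x) ⟨(k : ℕ), by have := k.isLt; omega⟩

/-- `𝒮_z' : ℂ^n → ℂ^{4n-1}`,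
`𝒮_z'(x) = (0_n, x_0, …, x_{n-1}, conj x_{n-1}, …, conj x_0, 0_{n-1})`. -/
noncomputable def symmetrizeZ' (n : ℕ) (x : Fin n → ℂ) : Fin (4 * n - 1) → ℂ :=
  fun k =>
    if _ : (k : ℕ) < n then 0
    else if h2 : (k : ℕ) < 2 * n then x ⟨(k : ℕ) - n, by omega⟩
    else if h3 : (k : ℕ) < 3 * n then (starRingEnd ℂ) (x ⟨3 * n - 1 - (k : ℕ), by omega⟩)
    else 0

lemma euclNorm_nonneg {m : ℕ} (u : Fin m → ℂ) : 0 ≤ euclNorm u := Real.sqrt_nonneg _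

lemma key {m s : ℕ} (u v : Fin m → ℂ)
    (hs : (Finset.univ.filter fun i => u i ≠ 0).card ≤ s) :
    euclNorm (cconv u v) ≤ Real.sqrt s * euclNorm u * euclNorm v := by
  set S := Finset.univ.filter fun i => u i ≠ 0 with hS
  have hA : (0:ℝ) ≤ ∑ l : Fin m, ‖u l‖^2 := Finset.sum_nonneg fun _ _ => sq_nonneg _
  have hB : (0:ℝ) ≤ ∑ l : Fin m, ‖v l‖^2 := Finset.sum_nonneg fun _ _ => sq_nonneg _
  have hAS : ∑ l ∈ S, ‖u l‖^2 ≤ ∑ l : Fin m, ‖u l‖^2 :=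
    Finset.sum_le_sum_of_subset_of_nonneg (Finset.subset_univ _) (fun _ _ _ => sq_nonneg _)
  have hpt : ∀ k, ‖cconv u v k‖^2 ≤
      (∑ l ∈ S, ‖u l‖^2) * (∑ l ∈ S, ‖v (k - l)‖^2) := by
    intro k
    have h1 : cconv u v k = ∑ l ∈ S, u l * v (k - l) := by
      rw [cconv]
      refine (Finset.sum_subset (Finset.subset_univ _) ?_).symm
      intro i _ hi
      simp only [hS, Finset.mem_filter, Finset.mem_univ, true_and, not_not] at hi
      simp [hi]
    have h2 : ‖cconv u v k‖ ≤ ∑ l ∈ S, ‖u l‖ * ‖v (k - l)‖ := by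
      rw [h1]
      refine (norm_sum_le _ _).trans ?_
      exact le_of_eq (Finset.sum_congr rfl fun l _ => norm_mul _ _)
    calc ‖cconv u v k‖^2 ≤ (∑ l ∈ S, ‖u l‖ * ‖v (k - l)‖)^2 := by
          exact pow_le_pow_left₀ (norm_nonneg _) h2 2
      _ ≤ (∑ l ∈ S, ‖u l‖^2) * (∑ l ∈ S, ‖v (k - l)‖^2) :=
          Finset.sum_mul_sq_le_sq_mul_sq S _ _
  have hswap : ∑ k : Fin m, ∑ l ∈ S, ‖v (k - l)‖^2 = (S.card : ℝ) * ∑ j : Fin m, ‖v j‖^2 := by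
    rw [Finset.sum_comm]
    have : ∀ l ∈ S, ∑ k : Fin m, ‖v (k - l)‖^2 = ∑ j : Fin m, ‖v j‖^2 := by
      intro l _
      rcases Nat.eq_zero_or_pos m with hm | hm
      · subst hm; exact l.elim0
      · haveI : NeZero m := ⟨hm.ne'⟩
        exact Fintype.sum_equiv (Equiv.subRight l) _ _ (fun k => rfl)
    rw [Finset.sum_congr rfl this, Finset.sum_const, nsmul_eq_mul]
  have htot : ∑ k : Fin m, ‖cconv u v k‖^2 ≤
      (s : ℝ) * (∑ l : Fin m, ‖u l‖^2) * (∑ l : Fin m, ‖v l‖^2) := by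
    calc ∑ k : Fin m, ‖cconv u v k‖^2
        ≤ ∑ k : Fin m, (∑ l ∈ S, ‖u l‖^2) * (∑ l ∈ S, ‖v (k - l)‖^2) :=
          Finset.sum_le_sum fun k _ => hpt k
      _ = (∑ l ∈ S, ‖u l‖^2) * ∑ k : Fin m, ∑ l ∈ S, ‖v (k - l)‖^2 := by
          rw [Finset.mul_sum]
      _ = (∑ l ∈ S, ‖u l‖^2) * ((S.card : ℝ) * ∑ j : Fin m, ‖v j‖^2) := by rw [hswap]
      _ ≤ (∑ l : Fin m, ‖u l‖^2) * ((s : ℝ) * ∑ j : Fin m, ‖v j‖^2) := by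
          apply mul_le_mul hAS ?_ (by positivity) hA
          exact mul_le_mul_of_nonneg_right (by exact_mod_cast hs) hB
      _ = (s : ℝ) * (∑ l : Fin m, ‖u l‖^2) * (∑ l : Fin m, ‖v l‖^2) := by ring
  have := Real.sqrt_le_sqrt htot
  rw [euclNorm]
  refine this.trans (le_of_eq ?_)
  rw [Real.sqrt_mul (by positivity), Real.sqrt_mul (Nat.cast_nonneg s)]
  rfl

lemma pad_filter_card_le (n m : ℕ) (hnm : n ≤ m) (x : Fin n → ℂ) :
    (Finset.univ.filter fun i => pad n m x i ≠ 0).card ≤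
      (Finset.univ.filter fun j => x j ≠ 0).card := by
  have hsub : (Finset.univ.filter fun i => pad n m x i ≠ 0) ⊆
      (Finset.univ.filter fun j => x j ≠ 0).image (Fin.castLE hnm) := by
    intro i hi
    simp only [Finset.mem_filter, Finset.mem_univ, true_and] at hi
    rcases lt_or_ge (i : ℕ) n with h | h
    · refine Finset.mem_image.2 ⟨⟨i, h⟩, ?_, ?_⟩
      · simp only [Finset.mem_filter, Finset.mem_univ, true_and]
        intro hx0; apply hi; simp [pad, h, hx0]
      · ext; simp
    · exfalso; apply hi; simp [pad, Nat.not_lt.2 h]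
  exact (Finset.card_le_card hsub).trans (Finset.card_image_le)

lemma pad_sum_sq (n m : ℕ) (hnm : n ≤ m) (x : Fin n → ℂ) :
    ∑ i : Fin m, ‖pad n m x i‖^2 = ∑ j : Fin n, ‖x j‖^2 := by
  rw [← Finset.sum_subset (Finset.subset_univ
      ((Finset.univ : Finset (Fin n)).image (Fin.castLE hnm))) ?_]
  · rw [Finset.sum_image (fun a _ b _ h => Fin.castLE_injective hnm h)]
    refine Finset.sum_congr rfl fun j _ => ?_
    have : ((Fin.castLE hnm j : Fin m) : ℕ) < n := j.isLt
    simp [pad, this]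
  · intro i _ hi
    have : ¬ ((i:ℕ) < n) := by
      intro h
      exact hi (Finset.mem_image.2 ⟨⟨i, h⟩, Finset.mem_univ _, by ext; simp⟩)
    simp [pad, this]

lemma euclNorm_pad (n m : ℕ) (hnm : n ≤ m) (x : Fin n → ℂ) :
    euclNorm (pad n m x) = euclNorm x := by
  rw [euclNorm, euclNorm, pad_sum_sq n m hnm]


/-- Upper bound for the zero-padded circular convolution of an `s`-sparse vector. -/
theorem zero_padded_cconv_upper_bound (n s : ℕ) (hsn : s ≤ n)
    (x y : Fin n → ℂ) (hx : sparse s x) :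
    euclNorm (cconv (pad n (2 * n - 1) x) (pad n (2 * n - 1) y)) ≤
      Real.sqrt s * euclNorm x * euclNorm y := by
  have hnm : n ≤ 2 * n - 1 := by omega
  have hx' : (Finset.univ.filter fun j => x j ≠ 0).card ≤ s := by
    rw [sparse, Set.ncard_eq_toFinset_card', Set.toFinset_setOf] at hx
    exact hx
  have hcard := (pad_filter_card_le n (2 * n - 1) hnm x).trans hx'
  have := key (pad n (2 * n - 1) x) (pad n (2 * n - 1) y) hcard
  rwa [euclNorm_pad n _ hnm, euclNorm_pad n _ hnm] at this
end

section
/- Let n ∈ ℕ, n ≥ 1, and set ñ = 4n−3. Let F be the ñ×ñ unitary DFT matrix and 𝒮_z : ℂ^n → ℂ^{ñ} the zero-padded symmetrization. Then for all x₁, x₂ ∈ ℂ^n with (x₁)_0, (x₂)_0 ∈ ℝ, it holds that √ñ · ‖ |F 𝒮_z(x₁)|² − |F 𝒮_z(x₂)|² ‖ = ‖ 𝒮_z(x₁ − x₂) ⊛ 𝒮_z(x₁ + x₂) ‖, where ⊛ is the circular convolution in ℂ^{ñ}. -/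
open scoped BigOperators

noncomputable def ee (m : ℕ) (a : ℤ) : ℂ :=
  Complex.exp (2 * (Real.pi : ℂ) * Complex.I * (a : ℂ) / (m : ℂ))

lemma ee_add (m : ℕ) (a b : ℤ) : ee m (a + b) = ee m a * ee m b := by
  rw [ee, ee, ee, ← Complex.exp_add]
  congr 1
  push_cast
  ring

lemma ee_zero (m : ℕ) : ee m 0 = 1 := by simp [ee]

lemma ee_dvd_eq_one (m : ℕ) (hm : 0 < m) (a : ℤ) (h : (m : ℤ) ∣ a) : ee m a = 1 := by
  obtain ⟨c, rfl⟩ := h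
  rw [ee]
  have hm' : (m : ℂ) ≠ 0 := by exact_mod_cast hm.ne'
  have : 2 * (Real.pi : ℂ) * Complex.I * ((((m : ℤ) * c : ℤ) : ℂ)) / (m : ℂ)
      = (c : ℂ) * (2 * (Real.pi : ℂ) * Complex.I) := by
    push_cast
    field_simp
  rw [this, Complex.exp_int_mul_two_pi_mul_I]

lemma ee_eq_of_dvd (m : ℕ) (hm : 0 < m) (a b : ℤ) (h : (m : ℤ) ∣ a - b) :
    ee m a = ee m b := by
  have : ee m a = ee m (b + (a - b)) := by ring_nf
  rw [this, ee_add, ee_dvd_eq_one m hm _ h, mul_one]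

lemma ee_conj (m : ℕ) (a : ℤ) : (starRingEnd ℂ) (ee m a) = ee m (-a) := by
  rw [ee, ee, ← Complex.exp_conj]
  congr 1
  have : (starRingEnd ℂ) (2 * (Real.pi : ℂ) * Complex.I * (a : ℂ) / (m : ℂ))
      = (starRingEnd ℂ) (2 * (Real.pi : ℂ) * Complex.I * (a : ℂ)) / (starRingEnd ℂ) (m : ℂ) :=
    map_div₀ _ _ _
  rw [this]
  simp [map_mul, map_ofNat, Complex.conj_I]

lemma ee_pow (m : ℕ) (a : ℤ) (l : ℕ) : ee m (a * l) = (ee m a) ^ l := by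
  rw [ee, ee, ← Complex.exp_nat_mul]
  congr 1
  push_cast
  ring

lemma ee_ne_one (m : ℕ) (hm : 0 < m) (a : ℤ) (h : ¬ (m : ℤ) ∣ a) : ee m a ≠ 1 := by
  intro hone
  rw [ee, Complex.exp_eq_one_iff] at hone
  obtain ⟨k, hk⟩ := hone
  have hm' : (m : ℂ) ≠ 0 := by exact_mod_cast hm.ne'
  have hI : 2 * (Real.pi : ℂ) * Complex.I ≠ 0 := by
    simp [Real.pi_ne_zero, Complex.I_ne_zero]
  have : (a : ℂ) = (k : ℂ) * (m : ℂ) := by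
    field_simp at hk
    have := hk
    -- hk : 2 * π * I * a = k * (2 * π * I) * m
    have h2 : 2 * (Real.pi : ℂ) * Complex.I * (a:ℂ) = 2 * (Real.pi : ℂ) * Complex.I * ((k:ℂ) * (m:ℂ)) := by
      rw [hk]; ring
    exact mul_left_cancel₀ hI h2
  have : a = k * m := by exact_mod_cast this
  exact h ⟨k, by rw [this]; ring⟩

lemma sum_ee (m : ℕ) (hm : 0 < m) (c : ℤ) :
    ∑ l : Fin m, ee m (c * (l : ℕ)) = if (m : ℤ) ∣ c then (m : ℂ) else 0 := by
  have key : ∀ l : Fin m, ee m (c * (l : ℕ)) = (ee m c) ^ (l : ℕ) := fun l => ee_pow m c l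
  simp_rw [key]
  rw [Fin.sum_univ_eq_sum_range (fun i => ee m c ^ i) m]
  split_ifs with h
  · have h1 : ee m c = 1 := ee_dvd_eq_one m hm c h
    simp [h1]
  · rw [geom_sum_eq (ee_ne_one m hm c h)]
    have : (ee m c) ^ m = 1 := by
      rw [← ee_pow, ee_dvd_eq_one m hm]
      exact ⟨c, by ring⟩
    rw [this]
    simp

lemma dft_apply (m : ℕ) (k l : Fin m) :
    dft m k l = ((Real.sqrt m : ℝ) : ℂ)⁻¹ * ee m ((k : ℕ) * (l : ℕ)) := by
  rw [dft, ee]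
  congr 1
  push_cast
  ring_nf

lemma dft_mulVec (m : ℕ) (u : Fin m → ℂ) (k : Fin m) :
    (dft m).mulVec u k = ((Real.sqrt m : ℝ) : ℂ)⁻¹ * ∑ l : Fin m, ee m ((k : ℕ) * (l : ℕ)) * u l := by
  rw [Matrix.mulVec, dotProduct, Finset.mul_sum]
  congr 1; funext l
  rw [dft_apply]; ring

lemma dvd_iff_eq (m : ℕ) (hm : 0 < m) (l l' : Fin m) :
    (m : ℤ) ∣ ((l : ℕ) : ℤ) - ((l' : ℕ) : ℤ) ↔ l = l' := by
  haveI := NeZero.of_pos hm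
  constructor
  · intro h
    have h0 : (((((l : ℕ) : ℤ) - ((l' : ℕ) : ℤ)) : ℤ) : ZMod m) = 0 :=
      (ZMod.intCast_zmod_eq_zero_iff_dvd _ m).mpr h
    push_cast at h0
    have h1 : (((l : ℕ) : ZMod m)) = ((l' : ℕ) : ZMod m) := by
      have := sub_eq_zero.mp h0
      exact_mod_cast this
    have h2 := congrArg ZMod.val h1
    rw [ZMod.val_cast_of_lt l.isLt, ZMod.val_cast_of_lt l'.isLt] at h2
    exact Fin.ext h2
  · rintro rfl; simp

lemma sqrt_cast_ne (m : ℕ) (hm : 0 < m) : ((Real.sqrt m : ℝ) : ℂ) ≠ 0 := by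
  have : (0:ℝ) < Real.sqrt m := Real.sqrt_pos.mpr (by exact_mod_cast hm)
  exact_mod_cast this.ne'

lemma parseval_complex (m : ℕ) (hm : 0 < m) (u v : Fin m → ℂ) :
    ∑ k : Fin m, (dft m).mulVec u k * (starRingEnd ℂ) ((dft m).mulVec v k)
      = ∑ l : Fin m, u l * (starRingEnd ℂ) (v l) := by
  set c : ℂ := ((Real.sqrt m : ℝ) : ℂ)⁻¹ with hc
  have hmne : (m : ℂ) ≠ 0 := by exact_mod_cast hm.ne'
  have hcc : c * c = (m : ℂ)⁻¹ := by
    rw [hc, ← mul_inv]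
    congr 1
    rw [← Complex.ofReal_mul, Real.mul_self_sqrt (by positivity)]
    norm_cast
  have hconj_c : (starRingEnd ℂ) c = c := by
    rw [hc, ← Complex.ofReal_inv]; exact Complex.conj_ofReal _
  calc ∑ k : Fin m, (dft m).mulVec u k * (starRingEnd ℂ) ((dft m).mulVec v k)
      = ∑ k : Fin m, (c * c) *
          ((∑ l : Fin m, ee m ((k:ℕ) * (l:ℕ)) * u l) *
           (∑ l' : Fin m, ee m (-((k:ℕ) * (l':ℕ) : ℤ)) * (starRingEnd ℂ) (v l'))) := by
        refine Finset.sum_congr rfl fun k _ => ?_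
        rw [dft_mulVec, dft_mulVec, map_mul, map_sum, hconj_c]
        simp_rw [map_mul, ee_conj]
        ring
    _ = ∑ k : Fin m, (c * c) * ∑ l : Fin m, ∑ l' : Fin m,
          (u l * (starRingEnd ℂ) (v l')) * ee m ((((l:ℕ):ℤ) - ((l':ℕ):ℤ)) * (k:ℕ)) := by
        refine Finset.sum_congr rfl fun k _ => ?_
        congr 1
        rw [Finset.sum_mul_sum]
        refine Finset.sum_congr rfl fun l _ => Finset.sum_congr rfl fun l' _ => ?_
        have h : ee m ((k:ℕ) * (l:ℕ)) * ee m (-((k:ℕ) * (l':ℕ) : ℤ))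
            = ee m ((((l:ℕ):ℤ) - ((l':ℕ):ℤ)) * (k:ℕ)) := by
          rw [← ee_add]; congr 1; push_cast; ring
        linear_combination (u l * (starRingEnd ℂ) (v l')) * h
    _ = (c * c) * ∑ l : Fin m, ∑ l' : Fin m,
          (u l * (starRingEnd ℂ) (v l')) *
            ∑ k : Fin m, ee m ((((l:ℕ):ℤ) - ((l':ℕ):ℤ)) * (k:ℕ)) := by
        rw [← Finset.mul_sum]
        congr 1
        rw [Finset.sum_comm]
        refine Finset.sum_congr rfl fun l _ => ?_
        rw [Finset.sum_comm]
        refine Finset.sum_congr rfl fun l' _ => ?_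
        rw [Finset.mul_sum]
    _ = (c * c) * ∑ l : Fin m, ∑ l' : Fin m,
          (u l * (starRingEnd ℂ) (v l')) * (if l = l' then (m:ℂ) else 0) := by
        congr 1
        refine Finset.sum_congr rfl fun l _ => Finset.sum_congr rfl fun l' _ => ?_
        rw [sum_ee m hm]
        congr 1
        exact if_congr (dvd_iff_eq m hm l l') rfl rfl
    _ = (c * c) * ∑ l : Fin m, (u l * (starRingEnd ℂ) (v l)) * m := by
        congr 1
        refine Finset.sum_congr rfl fun l _ => ?_
        simp [mul_ite, mul_zero, Finset.sum_ite_eq]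
    _ = ∑ l : Fin m, u l * (starRingEnd ℂ) (v l) := by
        rw [hcc, ← Finset.sum_mul]
        field_simp

lemma parseval_norm (m : ℕ) (hm : 0 < m) (u : Fin m → ℂ) :
    ∑ k : Fin m, ‖(dft m).mulVec u k‖ ^ 2 = ∑ l : Fin m, ‖u l‖ ^ 2 := by
  have h := parseval_complex m hm u u
  simp_rw [Complex.mul_conj] at h
  have h2 : ((∑ k : Fin m, Complex.normSq ((dft m).mulVec u k) : ℝ) : ℂ)
      = ((∑ l : Fin m, Complex.normSq (u l) : ℝ) : ℂ) := by push_cast; exact h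
  have h3 := Complex.ofReal_injective h2
  simpa [Complex.normSq_eq_norm_sq] using h3

lemma dft_cconv (m : ℕ) (hm : 0 < m) (a b : Fin m → ℂ) (k : Fin m) :
    (dft m).mulVec (cconv a b) k
      = ((Real.sqrt m : ℝ) : ℂ) * ((dft m).mulVec a k * (dft m).mulVec b k) := by
  haveI := NeZero.of_pos hm
  rw [dft_mulVec, dft_mulVec, dft_mulVec]
  set c : ℂ := ((Real.sqrt m : ℝ) : ℂ)⁻¹ with hc
  have h1 : ((Real.sqrt m : ℝ) : ℂ) * c = 1 := mul_inv_cancel₀ (sqrt_cast_ne m hm)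
  have key : ∑ j : Fin m, ee m ((k:ℕ) * (j:ℕ)) * cconv a b j
      = (∑ l : Fin m, ee m ((k:ℕ) * (l:ℕ)) * a l) *
        (∑ t : Fin m, ee m ((k:ℕ) * (t:ℕ)) * b t) := by
    rw [Finset.sum_mul_sum]
    simp_rw [cconv, Finset.mul_sum]
    rw [Finset.sum_comm]
    refine Finset.sum_congr rfl fun l _ => ?_
    rw [← Equiv.sum_comp (Equiv.addRight l)
      (fun j => ee m ((k:ℕ) * (j:ℕ)) * (a l * b (j - l)))]
    refine Finset.sum_congr rfl fun t _ => ?_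
    simp only [Equiv.coe_addRight]
    have hsub : t + l - l = t := add_sub_cancel_right t l
    rw [hsub]
    have hval : (((t + l : Fin m) : ℕ) : ℤ) + (m : ℤ) * (((t:ℕ) + (l:ℕ)) / m : ℕ)
        = ((t:ℕ) : ℤ) + ((l:ℕ) : ℤ) := by
      have h := Nat.mod_add_div ((t:ℕ) + (l:ℕ)) m
      have hadd : ((t + l : Fin m) : ℕ) = ((t:ℕ) + (l:ℕ)) % m := Fin.val_add t l
      rw [hadd]
      exact_mod_cast h
    have hee : ee m ((k:ℕ) * ((t + l : Fin m) : ℕ))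
        = ee m ((k:ℕ) * (l:ℕ)) * ee m ((k:ℕ) * (t:ℕ)) := by
      rw [← ee_add]
      apply ee_eq_of_dvd m hm
      exact ⟨-(((k:ℕ):ℤ) * (((t:ℕ) + (l:ℕ)) / m : ℕ)), by linear_combination ((k:ℕ):ℤ) * hval⟩
    linear_combination (a l * b t) * hee
  rw [key]
  linear_combination - c * ((∑ l : Fin m, ee m ((k:ℕ) * (l:ℕ)) * a l) *
    (∑ t : Fin m, ee m ((k:ℕ) * (t:ℕ)) * b t)) * h1


lemma dft_real (m : ℕ) (hm : 0 < m) (u : Fin m → ℂ)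
    (hu : ∀ l : Fin m, (starRingEnd ℂ) (u l) = u (-l)) (k : Fin m) :
    (starRingEnd ℂ) ((dft m).mulVec u k) = (dft m).mulVec u k := by
  haveI := NeZero.of_pos hm
  rw [dft_mulVec, map_mul, map_sum]
  have hconj_c : (starRingEnd ℂ) (((Real.sqrt m : ℝ) : ℂ)⁻¹) = ((Real.sqrt m : ℝ) : ℂ)⁻¹ := by
    rw [← Complex.ofReal_inv]; exact Complex.conj_ofReal _
  rw [hconj_c]
  congr 1
  calc ∑ l : Fin m, (starRingEnd ℂ) (ee m ((k:ℕ) * (l:ℕ)) * u l)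
      = ∑ l : Fin m, ee m (-((k:ℕ) * (l:ℕ) : ℤ)) * u (-l) := by
        refine Finset.sum_congr rfl fun l _ => ?_
        rw [map_mul, ee_conj, hu]
    _ = ∑ j : Fin m, ee m (-((k:ℕ) * (((-j : Fin m)):ℕ) : ℤ)) * u j := by
        rw [← Equiv.sum_comp (Equiv.neg (Fin m))
          (fun l => ee m (-((k:ℕ) * ((l:Fin m):ℕ) : ℤ)) * u (-l))]
        refine Finset.sum_congr rfl fun j _ => ?_
        simp only [Equiv.neg_apply, neg_neg]
    _ = ∑ j : Fin m, ee m ((k:ℕ) * (j:ℕ)) * u j := by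
        refine Finset.sum_congr rfl fun j _ => ?_
        congr 1
        apply ee_eq_of_dvd m hm
        have hdvd : m ∣ (((-j : Fin m)):ℕ) + (j:ℕ) := by
          have hneg : (((-j : Fin m)):ℕ) = (m - (j:ℕ)) % m := by rw [Fin.neg_def]
          rcases Nat.eq_zero_or_pos (j:ℕ) with h0 | h0
          · rw [hneg, h0, Nat.sub_zero, Nat.mod_self]
            simp
          · have : (m - (j:ℕ)) % m = m - (j:ℕ) := Nat.mod_eq_of_lt (by omega)
            rw [hneg, this]
            exact ⟨1, by have := j.isLt; omega⟩
        obtain ⟨q, hq⟩ := hdvd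
        refine ⟨-(((k:ℕ):ℤ) * q), ?_⟩
        have hq' : ((((-j : Fin m)):ℕ) : ℤ) + ((j:ℕ) : ℤ) = (m : ℤ) * q := by exact_mod_cast hq
        linear_combination (-((k:ℕ):ℤ)) * hq'

lemma symmetrizeZ_conj (n : ℕ) (hn : 0 < n) (x : Fin n → ℂ) (hx : (x ⟨0, hn⟩).im = 0)
    (k : Fin (4 * n - 3)) :
    (starRingEnd ℂ) (symmetrizeZ n x k) = symmetrizeZ n x (-k) := by
  have hkl := k.isLt
  by_cases hk0 : (k : ℕ) = 0
  · have hneg : ((-k : Fin (4*n-3)) : ℕ) = 0 := by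
      rw [Fin.neg_def]
      simp only [hk0, Nat.sub_zero, Nat.mod_self]
    simp only [symmetrizeZ, symmetrize, pad, hneg, hk0]
    rw [dif_pos (by omega : 0 < 2*n-1), dif_pos hn]
    exact Complex.conj_eq_iff_im.mpr hx
  · have hneg : ((-k : Fin (4*n-3)) : ℕ) = 4*n-3 - (k : ℕ) := by
      rw [Fin.neg_def]
      exact Nat.mod_eq_of_lt (by omega)
    simp only [symmetrizeZ, symmetrize, pad, hneg]
    split_ifs
    all_goals try omega
    all_goals try simp only [Complex.conj_conj, map_zero]
    all_goals try rfl
    all_goals first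
      | (refine congrArg x ?_; simp only [Fin.mk.injEq]; omega)
      | (congr 1; refine congrArg x ?_; simp only [Fin.mk.injEq]; omega)


lemma symmetrizeZ_sub (n : ℕ) (x y : Fin n → ℂ) :
    symmetrizeZ n (x - y) = symmetrizeZ n x - symmetrizeZ n y := by
  funext k
  simp only [symmetrizeZ, symmetrize, pad, Pi.sub_apply]
  split_ifs <;> simp

lemma symmetrizeZ_add (n : ℕ) (x y : Fin n → ℂ) :
    symmetrizeZ n (x + y) = symmetrizeZ n x + symmetrizeZ n y := by
  funext k
  simp only [symmetrizeZ, symmetrize, pad, Pi.add_apply]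
  split_ifs <;> simp


/-- `√ñ ‖|F𝒮_z(x₁)|² − |F𝒮_z(x₂)|²‖ = ‖𝒮_z(x₁−x₂) ⊛ 𝒮_z(x₁+x₂)‖` with `ñ = 4n-3`. -/
theorem dft_magnitude_difference_eq (n : ℕ) (hn : 0 < n) (x₁ x₂ : Fin n → ℂ)
    (h₁ : (x₁ ⟨0, hn⟩).im = 0) (h₂ : (x₂ ⟨0, hn⟩).im = 0) :
    Real.sqrt (4 * n - 3) *
      euclNorm (fun k => ‖(dft (4 * n - 3)).mulVec (symmetrizeZ n x₁) k‖ ^ 2 -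
        ‖(dft (4 * n - 3)).mulVec (symmetrizeZ n x₂) k‖ ^ 2) =
      euclNorm (cconv (symmetrizeZ n (x₁ - x₂)) (symmetrizeZ n (x₁ + x₂))) := by
  have hm : 0 < 4 * n - 3 := by omega
  have hre₁ : ∀ k, ((dft (4*n-3)).mulVec (symmetrizeZ n x₁) k).im = 0 := fun k =>
    Complex.conj_eq_iff_im.mp (dft_real _ hm _ (symmetrizeZ_conj n hn x₁ h₁) k)
  have hre₂ : ∀ k, ((dft (4*n-3)).mulVec (symmetrizeZ n x₂) k).im = 0 := fun k =>
    Complex.conj_eq_iff_im.mp (dft_real _ hm _ (symmetrizeZ_conj n hn x₂ h₂) k)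
  have habs : ∀ z : ℂ, z.im = 0 → ‖z‖ ^ 2 = z.re ^ 2 := by
    intro z h
    rw [Complex.sq_norm, Complex.normSq_apply, h]
    ring
  have hreal_eq : ∀ z : ℂ, z.im = 0 → z = ((z.re : ℝ) : ℂ) := by
    intro z h
    apply Complex.ext
    · simp
    · simp [h]
  set r : Fin (4*n-3) → ℝ := fun k =>
    ‖(dft (4*n-3)).mulVec (symmetrizeZ n x₁) k‖ ^ 2 -
      ‖(dft (4*n-3)).mulVec (symmetrizeZ n x₂) k‖ ^ 2 with hr
  have hkey : ∀ k, (dft (4*n-3)).mulVec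
      (cconv (symmetrizeZ n (x₁ - x₂)) (symmetrizeZ n (x₁ + x₂))) k
      = ((Real.sqrt ((4*n-3 : ℕ) : ℝ) : ℝ) : ℂ) * ((r k : ℝ) : ℂ) := by
    intro k
    rw [dft_cconv _ hm]
    congr 1
    rw [symmetrizeZ_sub, symmetrizeZ_add, Matrix.mulVec_sub, Matrix.mulVec_add]
    simp only [Pi.sub_apply, Pi.add_apply]
    have e₁ := hreal_eq _ (hre₁ k)
    have e₂ := hreal_eq _ (hre₂ k)
    have hrk : r k = ((dft (4*n-3)).mulVec (symmetrizeZ n x₁) k).re ^ 2 -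
        ((dft (4*n-3)).mulVec (symmetrizeZ n x₂) k).re ^ 2 := by
      simp only [hr]
      rw [habs _ (hre₁ k), habs _ (hre₂ k)]
    rw [hrk]
    push_cast
    linear_combination
      ((dft (4*n-3)).mulVec (symmetrizeZ n x₁) k +
        ((((dft (4*n-3)).mulVec (symmetrizeZ n x₁) k).re : ℝ) : ℂ)) * e₁ -
      ((dft (4*n-3)).mulVec (symmetrizeZ n x₂) k +
        ((((dft (4*n-3)).mulVec (symmetrizeZ n x₂) k).re : ℝ) : ℂ)) * e₂
  have hsum : ∑ k : Fin (4*n-3),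
      ‖cconv (symmetrizeZ n (x₁ - x₂)) (symmetrizeZ n (x₁ + x₂)) k‖ ^ 2
      = ((4*n-3 : ℕ) : ℝ) * ∑ k : Fin (4*n-3), (r k) ^ 2 := by
    rw [← parseval_norm _ hm, Finset.mul_sum]
    refine Finset.sum_congr rfl fun k _ => ?_
    rw [hkey k, norm_mul, mul_pow, Complex.norm_real, Complex.norm_real,
      Real.norm_eq_abs, Real.norm_eq_abs, sq_abs, sq_abs, Real.sq_sqrt (by positivity)]
  have hcast : 4 * (n : ℝ) - 3 = ((4*n-3 : ℕ) : ℝ) := by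
    rw [Nat.cast_sub (by omega)]
    push_cast
    ring
  simp only [euclNorm]
  rw [hcast, ← Real.sqrt_mul (by positivity)]
  congr 1
  rw [hsum]
  congr 1
  refine Finset.sum_congr rfl fun k _ => ?_
  rw [Real.norm_eq_abs, sq_abs]
end

section
/- Let n ∈ ℕ, n ≥ 1, and set ñ = 4n−1. Let F be the ñ×ñ unitary DFT matrix and let 𝒮_z' : ℂ^n → ℂ^{ñ} be defined by 𝒮_z'(x) = (0_n, x_0, …, x_{n−1}, conj(x_{n−1}), …, conj(x_0), 0_{n−1}). Then there exists a constant c > 0 (depending only on ñ) such that for all x₁, x₂ ∈ ℂ^n, it holds that ‖ |F 𝒮_z'(x₁)|² − |F 𝒮_z'(x₂)|² ‖ ≥ c · ‖x₁ − x₂‖ · ‖x₁ + x₂‖. -/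
open scoped BigOperators

section Aux

open Finset Polynomial

lemma sym_conj {n : ℕ} (hn : 0 < n) (x : Fin n → ℂ) (k : Fin (4*n-1)) :
    symmetrizeZ' n x (-k) = (starRingEnd ℂ) (symmetrizeZ' n x k) := by
  have hm : (k : ℕ) < 4*n-1 := k.isLt
  have hval : ((-k : Fin (4*n-1)) : ℕ) = (4*n-1 - (k:ℕ)) % (4*n-1) := by
    rw [Fin.neg_def]
  have hv : ((-k : Fin (4*n-1)) : ℕ) + (k:ℕ) = 0 ∨
      ((-k : Fin (4*n-1)) : ℕ) + (k:ℕ) = 4*n-1 := by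
    rcases Nat.eq_zero_or_pos (k:ℕ) with h | h
    · left; rw [hval, h, Nat.sub_zero, Nat.mod_self]
    · right; rw [hval, Nat.mod_eq_of_lt (by omega)]; omega
  rcases hv with hv | hv <;>
  · simp only [symmetrizeZ']
    split_ifs <;>
      first
        | (exfalso; omega)
        | rfl
        | (exact (map_zero (starRingEnd ℂ)).symm)
        | (congr 1; simp only [Fin.mk.injEq]; omega)
        | (rw [Complex.conj_conj]; congr 1; simp only [Fin.mk.injEq]; omega)
        | (congr 1; congr 1; simp only [Fin.mk.injEq]; omega)


lemma dft_conj_neg {m : ℕ} (k l : Fin m) :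
    (starRingEnd ℂ) (dft m k (-l)) = dft m k l := by
  have hm : 0 < m := l.pos
  have hmC : (m : ℂ) ≠ 0 := Nat.cast_ne_zero.mpr hm.ne'
  unfold dft
  rw [map_mul, ← Complex.exp_conj, map_inv₀, Complex.conj_ofReal]
  congr 1
  have hconj : (starRingEnd ℂ) (2 * (Real.pi : ℂ) * Complex.I * ((k : ℕ) : ℂ) *
      (((-l : Fin m) : ℕ) : ℂ) / (m : ℂ)) =
      2 * (Real.pi : ℂ) * (-Complex.I) * ((k : ℕ) : ℂ) * (((-l : Fin m) : ℕ) : ℂ) / (m : ℂ) := by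
    simp [map_div₀, Complex.conj_I, Complex.conj_ofReal, map_ofNat]
  rw [hconj]
  rcases Nat.eq_zero_or_pos (l : ℕ) with h0 | h0
  · have : ((-l : Fin m) : ℕ) = 0 := by
      rw [Fin.neg_def]; simp [h0, Nat.mod_self]
    rw [this, h0]; norm_num
  · have hv : ((-l : Fin m) : ℕ) = m - (l : ℕ) := by
      rw [Fin.neg_def]; simp only []
      rw [Nat.mod_eq_of_lt (by omega)]
    rw [hv]
    have hcast : ((m - (l : ℕ) : ℕ) : ℂ) = (m : ℂ) - ((l : ℕ) : ℂ) := by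
      push_cast [Nat.cast_sub (le_of_lt l.isLt)]; ring
    rw [hcast]
    have key : 2 * (Real.pi : ℂ) * (-Complex.I) * ((k : ℕ) : ℂ) * ((m : ℂ) - ((l : ℕ) : ℂ)) / (m : ℂ)
        = 2 * (Real.pi : ℂ) * Complex.I * ((k : ℕ) : ℂ) * ((l : ℕ) : ℂ) / (m : ℂ)
          + ((-(k : ℕ) : ℤ) : ℂ) * (2 * (Real.pi : ℂ) * Complex.I) := by
      push_cast
      field_simp
      ring
    rw [key, Complex.exp_add, Complex.exp_int_mul_two_pi_mul_I, mul_one]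

lemma mulVec_real {m : ℕ} (y : Fin m → ℂ)
    (hy : ∀ l, y (-l) = (starRingEnd ℂ) (y l)) (k : Fin m) :
    ((dft m).mulVec y k).im = 0 := by
  rw [← Complex.conj_eq_iff_im]
  have : (dft m).mulVec y k = ∑ l, dft m k l * y l := by
    simp [Matrix.mulVec, dotProduct]
  rw [this, map_sum]
  refine Fintype.sum_equiv (Equiv.neg (Fin m)) _ _ (fun l => ?_)
  simp only [Equiv.neg_apply, map_mul]
  have h1 : (starRingEnd ℂ) (dft m k l) = dft m k (-l) := by
    rw [← dft_conj_neg k (-l), neg_neg]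
  rw [h1, ← hy l]


section ZeroCount

variable {n : ℕ}

noncomputable def coefQ (n : ℕ) (x : Fin n → ℂ) : ℕ → ℂ := fun j =>
  if h : n + j < 4 * n - 1 then symmetrizeZ' n x ⟨n + j, h⟩ else 0

noncomputable def polyQ (n : ℕ) (x : Fin n → ℂ) : Polynomial ℂ :=
  ∑ j ∈ Finset.range (2 * n), Polynomial.C (coefQ n x j) * Polynomial.X ^ j

lemma polyQ_coeff (x : Fin n → ℂ) (j : ℕ) (hj : j < 2 * n) :
    (polyQ n x).coeff j = coefQ n x j := by
  unfold polyQ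
  rw [Polynomial.finset_sum_coeff]
  simp only [Polynomial.coeff_C_mul, Polynomial.coeff_X_pow, mul_ite, mul_one, mul_zero]
  rw [Finset.sum_ite_eq (Finset.range (2 * n)) j (coefQ n x)]
  simp [hj]

lemma polyQ_ne_zero (hn : 0 < n) (x : Fin n → ℂ) (hx : x ≠ 0) : polyQ n x ≠ 0 := by
  obtain ⟨i, hi⟩ := Function.ne_iff.mp hx
  have hi' : x i ≠ 0 := by simpa using hi
  intro hQ
  apply hi'
  have h1 : (polyQ n x).coeff i = coefQ n x i := polyQ_coeff x i (by omega)
  have h2 : coefQ n x i = x i := by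
    unfold coefQ
    have hlt : n + (i : ℕ) < 4 * n - 1 := by have := i.isLt; omega
    rw [dif_pos hlt]
    unfold symmetrizeZ'
    have hni : ¬ (n + (i : ℕ) < n) := by omega
    have h2n : n + (i : ℕ) < 2 * n := by have := i.isLt; omega
    rw [dif_neg, dif_pos]
    · exact congrArg x (Fin.ext (by simp only [Fin.val_mk]; omega))
    · simpa using h2n
    · simpa using hni
  rw [hQ] at h1
  simp only [Polynomial.coeff_zero] at h1
  rw [← h2]
  exact h1.symm

lemma polyQ_natDegree_le (x : Fin n → ℂ) : (polyQ n x).natDegree ≤ 2 * n - 1 := by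
  apply Polynomial.natDegree_sum_le_of_forall_le
  intro j hj
  refine le_trans (Polynomial.natDegree_C_mul_le _ _) ?_
  rw [Polynomial.natDegree_X_pow]
  have := Finset.mem_range.mp hj
  omega

lemma sym_vanish (hn : 0 < n) (x : Fin n → ℂ) (j : ℕ) (hj : j < 4 * n - 1)
    (h : j < n ∨ 3 * n ≤ j) : symmetrizeZ' n x ⟨j, hj⟩ = 0 := by
  unfold symmetrizeZ'
  rcases h with h | h
  · rw [dif_pos]; simpa using h
  · rw [dif_neg, dif_neg, dif_neg] <;> simp <;> omega

lemma mulVec_eq_eval (hn : 0 < n) (x : Fin n → ℂ) (k : Fin (4 * n - 1)) :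
    (dft (4 * n - 1)).mulVec (symmetrizeZ' n x) k =
      ((Real.sqrt ((4 * n - 1 : ℕ) : ℝ) : ℝ) : ℂ)⁻¹ *
        (Complex.exp (2 * (Real.pi : ℂ) * Complex.I * ((k : ℕ) : ℂ) / ((4 * n - 1 : ℕ) : ℂ)) ^ n *
          (polyQ n x).eval
            (Complex.exp (2 * (Real.pi : ℂ) * Complex.I * ((k : ℕ) : ℂ) / ((4 * n - 1 : ℕ) : ℂ)))) := by
  set c : ℂ := ((Real.sqrt ((4 * n - 1 : ℕ) : ℝ) : ℝ) : ℂ)⁻¹ with hc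
  set ω : ℂ := Complex.exp (2 * (Real.pi : ℂ) * Complex.I * ((k : ℕ) : ℂ) / ((4 * n - 1 : ℕ) : ℂ)) with hω
  set y : Fin (4 * n - 1) → ℂ := symmetrizeZ' n x with hy
  have hdft : ∀ l : Fin (4 * n - 1), dft (4 * n - 1) k l = c * ω ^ (l : ℕ) := by
    intro l
    unfold dft
    congr 1
    rw [hω, ← Complex.exp_nat_mul]
    congr 1
    ring
  have step1 : (dft (4 * n - 1)).mulVec y k = ∑ l : Fin (4 * n - 1), c * ω ^ (l : ℕ) * y l := by
    simp only [Matrix.mulVec, dotProduct]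
    exact Finset.sum_congr rfl (fun l _ => by rw [hdft l])
  rw [step1]
  have step2 : ∑ l : Fin (4 * n - 1), c * ω ^ (l : ℕ) * y l =
      ∑ j ∈ Finset.range (4 * n - 1), (fun j => if h : j < 4 * n - 1 then c * ω ^ j * y ⟨j, h⟩ else 0) j := by
    rw [← Fin.sum_univ_eq_sum_range]
    exact Finset.sum_congr rfl (fun l _ => by rw [dif_pos l.isLt])
  rw [step2]
  have hsub : Finset.Ico n (3 * n) ⊆ Finset.range (4 * n - 1) := by
    intro j hj
    simp only [Finset.mem_Ico] at hj
    simp only [Finset.mem_range]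
    omega
  rw [← Finset.sum_subset hsub]
  · rw [Finset.sum_Ico_eq_sum_range]
    have h3 : 3 * n - n = 2 * n := by omega
    rw [h3]
    have heval : (polyQ n x).eval ω = ∑ j ∈ Finset.range (2 * n), coefQ n x j * ω ^ j := by
      unfold polyQ
      rw [Polynomial.eval_finset_sum]
      exact Finset.sum_congr rfl (fun j _ => by simp)
    rw [heval, Finset.mul_sum, Finset.mul_sum]
    refine Finset.sum_congr rfl (fun j hj => ?_)
    have hjlt := Finset.mem_range.mp hj
    have hnj : n + j < 4 * n - 1 := by omega
    rw [dif_pos hnj]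
    have hcoef : coefQ n x j = y ⟨n + j, hnj⟩ := by
      unfold coefQ; rw [dif_pos]
    rw [hcoef, pow_add]
    ring
  · intro j hjr hjn
    simp only [Finset.mem_range] at hjr
    simp only [Finset.mem_Ico, not_and_or, not_le, not_lt] at hjn
    rw [dif_pos hjr]
    have : y ⟨j, hjr⟩ = 0 := by
      apply sym_vanish hn
      omega
    rw [this, mul_zero]

lemma exp_pow (m : ℕ) (k : Fin m) :
    Complex.exp (2 * (Real.pi : ℂ) * Complex.I * ((k : ℕ) : ℂ) / (m : ℂ)) =
      Complex.exp (2 * (Real.pi : ℂ) * Complex.I / (m : ℂ)) ^ (k : ℕ) := by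
  rw [← Complex.exp_nat_mul]
  congr 1
  ring

lemma card_zeros (hn : 0 < n) (x : Fin n → ℂ) (hx : x ≠ 0) (Z : Finset (Fin (4 * n - 1)))
    (hZ : ∀ k ∈ Z, (dft (4 * n - 1)).mulVec (symmetrizeZ' n x) k = 0) :
    Z.card ≤ 2 * n - 1 := by
  classical
  have hmpos : 0 < 4 * n - 1 := by omega
  have hQne : polyQ n x ≠ 0 := polyQ_ne_zero hn x hx
  have hζ : IsPrimitiveRoot (Complex.exp (2 * (Real.pi : ℂ) * Complex.I / ((4 * n - 1 : ℕ) : ℂ)))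
      (4 * n - 1) := Complex.isPrimitiveRoot_exp (4 * n - 1) hmpos.ne'
  have hmaps : ∀ k ∈ Z,
      Complex.exp (2 * (Real.pi : ℂ) * Complex.I * ((k : ℕ) : ℂ) / ((4 * n - 1 : ℕ) : ℂ)) ∈
        (polyQ n x).roots.toFinset := by
    intro k hk
    have h0 := hZ k hk
    rw [mulVec_eq_eval hn x k] at h0
    have hcne : ((Real.sqrt ((4 * n - 1 : ℕ) : ℝ) : ℝ) : ℂ)⁻¹ ≠ 0 := by
      apply inv_ne_zero
      simp only [ne_eq, Complex.ofReal_eq_zero]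
      exact (Real.sqrt_pos.mpr (by exact_mod_cast hmpos)).ne'
    have hroot : (polyQ n x).eval
        (Complex.exp (2 * (Real.pi : ℂ) * Complex.I * ((k : ℕ) : ℂ) / ((4 * n - 1 : ℕ) : ℂ))) = 0 := by
      rcases mul_eq_zero.mp h0 with h | h
      · exact absurd h hcne
      · rcases mul_eq_zero.mp h with h | h
        · exact absurd h (pow_ne_zero _ (Complex.exp_ne_zero _))
        · exact h
    rw [Multiset.mem_toFinset, Polynomial.mem_roots hQne]
    exact hroot
  have hinj : ∀ k₁ ∈ Z, ∀ k₂ ∈ Z,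
      Complex.exp (2 * (Real.pi : ℂ) * Complex.I * ((k₁ : ℕ) : ℂ) / ((4 * n - 1 : ℕ) : ℂ)) =
        Complex.exp (2 * (Real.pi : ℂ) * Complex.I * ((k₂ : ℕ) : ℂ) / ((4 * n - 1 : ℕ) : ℂ)) →
      k₁ = k₂ := by
    intro k₁ _ k₂ _ h
    rw [exp_pow (4 * n - 1) k₁, exp_pow (4 * n - 1) k₂] at h
    exact Fin.ext (hζ.pow_inj k₁.isLt k₂.isLt h)
  calc Z.card ≤ (polyQ n x).roots.toFinset.card :=
        Finset.card_le_card_of_injOn _ hmaps hinj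
    _ ≤ Multiset.card (polyQ n x).roots := (polyQ n x).roots.toFinset_card_le
    _ ≤ (polyQ n x).natDegree := Polynomial.card_roots' (polyQ n x)
    _ ≤ 2 * n - 1 := polyQ_natDegree_le x

end ZeroCount


/-! ### Norm lemmas -/

lemma euclNorm_nonneg_s16 {m : ℕ} {E : Type*} [SeminormedAddGroup E] (x : Fin m → E) :
    0 ≤ euclNorm x := Real.sqrt_nonneg _

lemma euclNorm_pos {m : ℕ} {E : Type*} [NormedAddCommGroup E] {x : Fin m → E} (hx : x ≠ 0) :
    0 < euclNorm x := by
  obtain ⟨i, hi⟩ := Function.ne_iff.mp hx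
  have hi' : x i ≠ 0 := by simpa using hi
  apply Real.sqrt_pos.mpr
  apply Finset.sum_pos' (fun j _ => by positivity)
  refine ⟨i, Finset.mem_univ i, ?_⟩
  have h0 : 0 < ‖x i‖ := norm_pos_iff.mpr hi'
  positivity

lemma euclNorm_smulv {m : ℕ} {E : Type*} [NormedAddCommGroup E] [NormedSpace ℝ E]
    (t : ℝ) (x : Fin m → E) : euclNorm (t • x) = |t| * euclNorm x := by
  unfold euclNorm
  have h : ∀ i : Fin m, ‖(t • x) i‖ ^ 2 = t ^ 2 * ‖x i‖ ^ 2 := by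
    intro i
    rw [Pi.smul_apply, norm_smul, Real.norm_eq_abs, mul_pow, sq_abs]
  rw [Finset.sum_congr rfl (fun i _ => h i), ← Finset.mul_sum,
    Real.sqrt_mul (sq_nonneg t), Real.sqrt_sq_eq_abs]

lemma euclNorm_zerov {m : ℕ} {E : Type*} [NormedAddCommGroup E] :
    euclNorm (0 : Fin m → E) = 0 := by
  unfold euclNorm
  simp

/-! ### Linearity of the symmetrization -/

variable {n : ℕ}

lemma sym_add (x₁ x₂ : Fin n → ℂ) :
    symmetrizeZ' n (x₁ + x₂) = symmetrizeZ' n x₁ + symmetrizeZ' n x₂ := by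
  funext k
  simp only [symmetrizeZ', Pi.add_apply]
  split_ifs <;> simp

lemma sym_sub (x₁ x₂ : Fin n → ℂ) :
    symmetrizeZ' n (x₁ - x₂) = symmetrizeZ' n x₁ - symmetrizeZ' n x₂ := by
  funext k
  simp only [symmetrizeZ', Pi.sub_apply]
  split_ifs <;> simp

lemma sym_smul (t : ℝ) (x : Fin n → ℂ) :
    symmetrizeZ' n (t • x) = (t : ℂ) • symmetrizeZ' n x := by
  funext k
  simp only [symmetrizeZ', Pi.smul_apply]
  split_ifs <;> simp [Complex.real_smul, Complex.conj_ofReal, smul_eq_mul]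

lemma mulVec_sym_im (hn : 0 < n) (x : Fin n → ℂ) (k : Fin (4 * n - 1)) :
    ((dft (4 * n - 1)).mulVec (symmetrizeZ' n x) k).im = 0 :=
  mulVec_real (symmetrizeZ' n x) (fun l => sym_conj hn x l) k

/-! ### The key bilinear function -/

noncomputable def Gfun (n : ℕ) (p : (Fin n → ℂ) × (Fin n → ℂ)) : ℝ :=
  euclNorm (fun k : Fin (4 * n - 1) =>
    ((dft (4 * n - 1)).mulVec (symmetrizeZ' n p.1) k).re *
      ((dft (4 * n - 1)).mulVec (symmetrizeZ' n p.2) k).re)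

lemma measurement_eq (hn : 0 < n) (x₁ x₂ : Fin n → ℂ) :
    (fun k : Fin (4 * n - 1) => ‖(dft (4 * n - 1)).mulVec (symmetrizeZ' n x₁) k‖ ^ 2 -
        ‖(dft (4 * n - 1)).mulVec (symmetrizeZ' n x₂) k‖ ^ 2) =
      fun k : Fin (4 * n - 1) =>
        ((dft (4 * n - 1)).mulVec (symmetrizeZ' n (x₁ - x₂)) k).re *
          ((dft (4 * n - 1)).mulVec (symmetrizeZ' n (x₁ + x₂)) k).re := by
  funext k
  have hnorm : ∀ z : ℂ, z.im = 0 → ‖z‖ ^ 2 = z.re ^ 2 := by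
    intro z hz
    rw [Complex.sq_norm, Complex.normSq_apply, hz]
    ring
  rw [hnorm _ (mulVec_sym_im hn x₁ k), hnorm _ (mulVec_sym_im hn x₂ k),
    sym_sub, sym_add, Matrix.mulVec_sub, Matrix.mulVec_add, Pi.sub_apply, Pi.add_apply,
    Complex.sub_re, Complex.add_re]
  ring

lemma Gfun_pos (hn : 0 < n) {d s : Fin n → ℂ} (hd : d ≠ 0) (hs : s ≠ 0) :
    0 < Gfun n (d, s) := by
  classical
  set Zd : Finset (Fin (4 * n - 1)) :=
    Finset.univ.filter (fun k => (dft (4 * n - 1)).mulVec (symmetrizeZ' n d) k = 0) with hZd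
  set Zs : Finset (Fin (4 * n - 1)) :=
    Finset.univ.filter (fun k => (dft (4 * n - 1)).mulVec (symmetrizeZ' n s) k = 0) with hZs
  have hcd : Zd.card ≤ 2 * n - 1 :=
    card_zeros hn d hd Zd (fun k hk => (Finset.mem_filter.mp hk).2)
  have hcs : Zs.card ≤ 2 * n - 1 :=
    card_zeros hn s hs Zs (fun k hk => (Finset.mem_filter.mp hk).2)
  have hnotsub : ¬ (Finset.univ ⊆ Zd ∪ Zs) := by
    intro h
    have h1 := Finset.card_le_card h
    rw [Finset.card_univ, Fintype.card_fin] at h1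
    have h2 := Finset.card_union_le Zd Zs
    omega
  obtain ⟨k, -, hk⟩ := Finset.not_subset.mp hnotsub
  rw [Finset.mem_union, not_or] at hk
  have hd0 : (dft (4 * n - 1)).mulVec (symmetrizeZ' n d) k ≠ 0 := by
    intro h; exact hk.1 (by rw [hZd]; simp [h])
  have hs0 : (dft (4 * n - 1)).mulVec (symmetrizeZ' n s) k ≠ 0 := by
    intro h; exact hk.2 (by rw [hZs]; simp [h])
  have hdre : ((dft (4 * n - 1)).mulVec (symmetrizeZ' n d) k).re ≠ 0 := by
    intro h
    exact hd0 (Complex.ext (by simpa using h) (by simpa using mulVec_sym_im hn d k))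
  have hsre : ((dft (4 * n - 1)).mulVec (symmetrizeZ' n s) k).re ≠ 0 := by
    intro h
    exact hs0 (Complex.ext (by simpa using h) (by simpa using mulVec_sym_im hn s k))
  unfold Gfun euclNorm
  apply Real.sqrt_pos.mpr
  apply Finset.sum_pos' (fun j _ => by positivity)
  refine ⟨k, Finset.mem_univ k, ?_⟩
  have hne : (0:ℝ) < ‖((dft (4 * n - 1)).mulVec (symmetrizeZ' n d) k).re *
      ((dft (4 * n - 1)).mulVec (symmetrizeZ' n s) k).re‖ :=
    norm_pos_iff.mpr (mul_ne_zero hdre hsre)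
  positivity

lemma Gfun_smul (t r : ℝ) (d s : Fin n → ℂ) :
    Gfun n (t • d, r • s) = |t| * |r| * Gfun n (d, s) := by
  unfold Gfun
  have hvec : (fun k : Fin (4 * n - 1) =>
      ((dft (4 * n - 1)).mulVec (symmetrizeZ' n (t • d)) k).re *
        ((dft (4 * n - 1)).mulVec (symmetrizeZ' n (r • s)) k).re) =
      (t * r) • (fun k : Fin (4 * n - 1) =>
        ((dft (4 * n - 1)).mulVec (symmetrizeZ' n d) k).re *
          ((dft (4 * n - 1)).mulVec (symmetrizeZ' n s) k).re) := by
    funext k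
    rw [sym_smul t d, sym_smul r s, Matrix.mulVec_smul, Matrix.mulVec_smul,
      Pi.smul_apply, Pi.smul_apply, Pi.smul_apply]
    simp only [smul_eq_mul, Complex.mul_re, Complex.ofReal_re, Complex.ofReal_im]
    ring
  rw [hvec, euclNorm_smulv, abs_mul]

lemma continuous_sym_apply (l : Fin (4 * n - 1)) :
    Continuous fun x : Fin n → ℂ => symmetrizeZ' n x l := by
  unfold symmetrizeZ'
  split_ifs
  · exact continuous_const
  · exact continuous_apply _
  · exact Complex.continuous_conj.comp (continuous_apply _)
  · exact continuous_const

lemma continuous_Gfun : Continuous (Gfun n) := by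
  have hmv : ∀ (k : Fin (4 * n - 1)),
      Continuous fun x : Fin n → ℂ => (dft (4 * n - 1)).mulVec (symmetrizeZ' n x) k := by
    intro k
    simp only [Matrix.mulVec, dotProduct]
    exact continuous_finset_sum _ (fun l _ => continuous_const.mul (continuous_sym_apply l))
  unfold Gfun euclNorm
  apply Real.continuous_sqrt.comp
  apply continuous_finset_sum
  intro k _
  exact ((((Complex.continuous_re.comp (hmv k)).comp continuous_fst).mul
    ((Complex.continuous_re.comp (hmv k)).comp continuous_snd)).norm.pow 2)

end Aux

/-- Stability of the `4n-1` magnitude Fourier measurements of `𝒮_z'` for all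
complex vectors. -/
theorem stable_recovery_symmetrizeZ_prime (n : ℕ) (hn : 0 < n) :
    ∃ c : ℝ, 0 < c ∧ ∀ x₁ x₂ : Fin n → ℂ,
      c * euclNorm (x₁ - x₂) * euclNorm (x₁ + x₂) ≤
        euclNorm (fun k => ‖(dft (4 * n - 1)).mulVec (symmetrizeZ' n x₁) k‖ ^ 2 -
          ‖(dft (4 * n - 1)).mulVec (symmetrizeZ' n x₂) k‖ ^ 2) := by
  classical
  haveI : NeZero n := ⟨hn.ne'⟩
  set S : Set (Fin n → ℂ) := {x | euclNorm x = 1} with hS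
  have hclosed : IsClosed S := by
    have hcont : Continuous fun x : Fin n → ℂ => euclNorm x := by
      unfold euclNorm
      exact Real.continuous_sqrt.comp
        (continuous_finset_sum _ (fun i _ => ((continuous_apply i).norm.pow 2)))
    exact isClosed_singleton.preimage hcont
  have hbdd : Bornology.IsBounded S := by
    apply (Metric.isBounded_closedBall (x := (0 : Fin n → ℂ)) (r := 1)).subset
    intro x hx
    rw [Metric.mem_closedBall, dist_zero_right]
    have hx1 : euclNorm x = 1 := hx
    have hsum : ∑ i, ‖x i‖ ^ 2 = 1 := by
      have h0 : (0 : ℝ) ≤ ∑ i, ‖x i‖ ^ 2 := Finset.sum_nonneg (fun i _ => by positivity)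
      have := hx1
      unfold euclNorm at this
      nlinarith [Real.sq_sqrt h0]
    rw [pi_norm_le_iff_of_nonneg zero_le_one]
    intro i
    have hle : ‖x i‖ ^ 2 ≤ 1 := by
      rw [← hsum]
      exact Finset.single_le_sum (f := fun j : Fin n => ‖x j‖ ^ 2) (fun j _ => by positivity) (Finset.mem_univ i)
    nlinarith [norm_nonneg (x i)]
  have hScompact : IsCompact S := Metric.isCompact_of_isClosed_isBounded hclosed hbdd
  have hSne : S.Nonempty := by
    refine ⟨fun i => if i = 0 then 1 else 0, ?_⟩
    show euclNorm _ = 1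
    unfold euclNorm
    rw [show ∑ i : Fin n, ‖(if i = 0 then (1 : ℂ) else 0)‖ ^ 2 = 1 by
      rw [Finset.sum_eq_single 0] <;> simp +contextual]
    exact Real.sqrt_one
  have hK : IsCompact (S ×ˢ S) := hScompact.prod hScompact
  have hKne : (S ×ˢ S).Nonempty := hSne.prod hSne
  obtain ⟨p₀, hp₀K, hp₀min⟩ := hK.exists_isMinOn hKne (continuous_Gfun (n := n)).continuousOn
  rw [isMinOn_iff] at hp₀min
  have hp₀1 : p₀.1 ≠ 0 := by
    intro h
    have h1 : euclNorm p₀.1 = 1 := (Set.mem_prod.mp hp₀K).1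
    rw [h, euclNorm_zerov] at h1
    norm_num at h1
  have hp₀2 : p₀.2 ≠ 0 := by
    intro h
    have h1 : euclNorm p₀.2 = 1 := (Set.mem_prod.mp hp₀K).2
    rw [h, euclNorm_zerov] at h1
    norm_num at h1
  refine ⟨Gfun n p₀, ?_, ?_⟩
  · have := Gfun_pos hn hp₀1 hp₀2
    simpa using this
  intro x₁ x₂
  rw [measurement_eq hn x₁ x₂]
  have hGr : euclNorm (fun k : Fin (4 * n - 1) =>
      ((dft (4 * n - 1)).mulVec (symmetrizeZ' n (x₁ - x₂)) k).re *
        ((dft (4 * n - 1)).mulVec (symmetrizeZ' n (x₁ + x₂)) k).re) =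
      Gfun n (x₁ - x₂, x₁ + x₂) := rfl
  rw [hGr]
  by_cases hd : x₁ - x₂ = 0
  · rw [hd, euclNorm_zerov]
    rw [mul_zero, zero_mul]
    exact euclNorm_nonneg_s16 _
  by_cases hs : x₁ + x₂ = 0
  · rw [hs, euclNorm_zerov, mul_zero]
    exact euclNorm_nonneg_s16 _
  have ht : 0 < euclNorm (x₁ - x₂) := euclNorm_pos hd
  have hr : 0 < euclNorm (x₁ + x₂) := euclNorm_pos hs
  set t := euclNorm (x₁ - x₂) with hT
  set r := euclNorm (x₁ + x₂) with hR
  have hmem : (t⁻¹ • (x₁ - x₂), r⁻¹ • (x₁ + x₂)) ∈ S ×ˢ S := by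
    constructor
    · show euclNorm _ = 1
      rw [euclNorm_smulv, ← hT, abs_of_pos (inv_pos.mpr ht), inv_mul_cancel₀ ht.ne']
    · show euclNorm _ = 1
      rw [euclNorm_smulv, ← hR, abs_of_pos (inv_pos.mpr hr), inv_mul_cancel₀ hr.ne']
  have hmin := hp₀min _ hmem
  have hsmul : Gfun n (x₁ - x₂, x₁ + x₂) =
      t * r * Gfun n (t⁻¹ • (x₁ - x₂), r⁻¹ • (x₁ + x₂)) := by
    rw [Gfun_smul, abs_of_pos (inv_pos.mpr ht), abs_of_pos (inv_pos.mpr hr)]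
    field_simp
  have htr : 0 < t * r := mul_pos ht hr
  calc Gfun n p₀ * t * r = t * r * Gfun n p₀ := by ring
    _ ≤ t * r * Gfun n (t⁻¹ • (x₁ - x₂), r⁻¹ • (x₁ + x₂)) := by
        exact mul_le_mul_of_nonneg_left hmin htr.le
    _ = Gfun n (x₁ - x₂, x₁ + x₂) := by rw [← hsmul]
end
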